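/- Let u be a Sturmian sequence with irrational slope α ∈ (0,1), let a = 1^ω, let b be a Sturmian sequence over {2,3}, and let v = colour(u, a, b). Then for every n ≥ 1 the factor complexity of v satisfies C_v(n) ≤ P_α(n) + (n+1)⌈nα⌉, where P_α(n) is the number of factors of u of length n containing ⌈nα⌉ occurrences of b. -/

import Mathlib

open scoped Classical

/-- The factor of length `n` of the sequence `s` starting at position `i`. -/
def fac {A : Type*} (s : ℕ → A) (i n : ℕ) : List A :=
  (List.range n).map (fun j => s (i + j))

/-- Sturmian sequence with slope `α` and intercept `ρ`:
`true` codes letter b (interval `[1-α,1)`), `false` codes letter a. -/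
noncomputable def sturmian (α ρ : ℝ) (n : ℕ) : Bool :=
  if 1 - α ≤ Int.fract (ρ + n * α) then true else false

/-- Sturmian sequence over the alphabet `{2,3}` with slope `γ` and intercept `ρ`. -/
noncomputable def sturmian23 (γ ρ : ℝ) (n : ℕ) : ℕ :=
  if 1 - γ ≤ Int.fract (ρ + n * γ) then 3 else 2

/-- Number of positions `k < n` with `u k = true` (letter `b`). -/
def countB (u : ℕ → Bool) (n : ℕ) : ℕ :=
  ((Finset.range n).filter (fun k => u k = true)).card

/-- Number of positions `k < n` with `u k = false` (letter `a`). -/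
def countA (u : ℕ → Bool) (n : ℕ) : ℕ :=
  ((Finset.range n).filter (fun k => u k = false)).card

/-- Colouring of a binary sequence `u` by sequences `a` and `b`. -/
def colour {A : Type*} (u : ℕ → Bool) (a b : ℕ → A) (n : ℕ) : A :=
  if u n then b (countB u n) else a (countA u n)

/-! ### Auxiliary lemmas about `fac` -/

lemma fac_length {A : Type*} (s : ℕ → A) (i n : ℕ) : (fac s i n).length = n := by
  simp [fac]

lemma fac_succ {A : Type*} (s : ℕ → A) (i n : ℕ) :
    fac s i (n+1) = fac s i n ++ [s (i+n)] := by
  simp [fac, List.range_succ]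

lemma fac_getD {A : Type*} (s : ℕ → A) (i n j : ℕ) (hj : j < n) (d : A) :
    (fac s i n).getD j d = s (i + j) := by
  rw [List.getD_eq_getElem _ _ (by simpa [fac_length] using hj)]
  simp [fac]

lemma fac_take {A : Type*} (s : ℕ → A) (i n k : ℕ) (hk : k ≤ n) :
    (fac s i n).take k = fac s i k := by
  simp [fac, ← List.map_take, List.take_range, Nat.min_eq_left hk]

lemma fac_map {A B : Type*} (f : A → B) (s : ℕ → A) (i n : ℕ) :
    (fac s i n).map f = fac (fun k => f (s k)) i n := by
  simp [fac, Function.comp]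

/-! ### The word determined by a point on the circle -/

noncomputable def W (γ x : ℝ) (m : ℕ) : List Bool :=
  (List.range m).map (fun k : ℕ => if 1 - γ ≤ Int.fract (x + (k : ℝ) * γ) then true else false)

lemma fac_sturmian (γ ρ : ℝ) (i m : ℕ) :
    fac (sturmian γ ρ) i m = W γ (ρ + i * γ) m := by
  apply List.map_congr_left
  intro k _
  have : ρ + (↑(i + k) : ℝ) * γ = (ρ + ↑i * γ) + ↑k * γ := by push_cast; ring
  rw [sturmian, this]

lemma W_fract (γ x : ℝ) (m : ℕ) : W γ x m = W γ (Int.fract x) m := by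
  apply List.map_congr_left
  intro k _
  have : Int.fract (x + k * γ) = Int.fract (Int.fract x + k * γ) := by
    conv_lhs => rw [← Int.floor_add_fract x]
    rw [add_assoc, Int.fract_intCast_add]
  rw [this]

lemma floor_step (γ t : ℝ) (h0 : 0 < γ) (h1 : γ < 1) :
    ⌊t + γ⌋ = ⌊t⌋ + (if 1 - γ ≤ Int.fract t then 1 else 0) := by
  have hf := Int.fract_nonneg t
  have hf1 := Int.fract_lt_one t
  split_ifs with h
  · rw [show t + γ = (Int.fract t + γ - 1) + ((⌊t⌋ + 1 : ℤ) : ℝ) by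
      push_cast; linarith [Int.floor_add_fract t], Int.floor_add_intCast,
      Int.floor_eq_zero_iff.2 ⟨by linarith, by linarith⟩]
    ring
  · push_neg at h
    rw [show t + γ = (Int.fract t + γ) + ((⌊t⌋ : ℤ) : ℝ) by
      push_cast; linarith [Int.floor_add_fract t],
      Int.floor_add_intCast, Int.floor_eq_zero_iff.2 ⟨by positivity, by linarith⟩]
    ring

lemma W_count (γ x : ℝ) (h0 : 0 < γ) (h1 : γ < 1) (m : ℕ) :
    ((W γ x m).count true : ℤ) = ⌊x + m * γ⌋ - ⌊x⌋ := by
  induction m with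
  | zero => simp [W]
  | succ k ih =>
    have hW : W γ x (k+1)
        = W γ x k ++ [if 1 - γ ≤ Int.fract (x + (k:ℝ) * γ) then true else false] := by
      simp [W, List.range_succ]
    rw [hW, List.count_append]
    have hx : x + (↑(k+1) : ℝ) * γ = (x + k * γ) + γ := by push_cast; ring
    rw [hx, floor_step _ _ h0 h1]
    push_cast
    split_ifs with h <;> simp [List.count_singleton] <;> omega

lemma W_take (γ x : ℝ) (m k : ℕ) (hk : k ≤ m) : (W γ x m).take k = W γ x k := by
  simp [W, ← List.map_take, List.take_range, Nat.min_eq_left hk]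

/-- The counting invariant of a Boolean word. -/
def F (m : ℕ) (w : List Bool) : ℤ :=
  ∑ k ∈ Finset.range (m+1), ((w.take k).count true : ℤ)

lemma F_W (γ x : ℝ) (h0 : 0 < γ) (h1 : γ < 1) (m : ℕ) (hx : x ∈ Set.Ico (0:ℝ) 1) :
    F m (W γ x m) = ∑ k ∈ Finset.range (m+1), ⌊x + k * γ⌋ := by
  have hx0 : ⌊x⌋ = 0 := Int.floor_eq_zero_iff.2 hx
  unfold F
  apply Finset.sum_congr rfl
  intro k hk
  rw [W_take _ _ _ _ (by simpa using Nat.lt_succ_iff.mp (Finset.mem_range.mp hk)),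
    W_count _ _ h0 h1, hx0]
  ring

lemma W_eq_of_F_eq (γ : ℝ) (h0 : 0 < γ) (h1 : γ < 1) (m : ℕ) {x y : ℝ}
    (hx : x ∈ Set.Ico (0:ℝ) 1) (hy : y ∈ Set.Ico (0:ℝ) 1) (hxy : x ≤ y)
    (hF : F m (W γ x m) = F m (W γ y m)) : W γ x m = W γ y m := by
  rw [F_W _ _ h0 h1 _ hx, F_W _ _ h0 h1 _ hy] at hF
  have hle : ∀ k ∈ Finset.range (m+1), ⌊x + k * γ⌋ ≤ ⌊y + k * γ⌋ := fun k _ =>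
    Int.floor_le_floor (by linarith)
  have heq : ∀ k ∈ Finset.range (m+1), ⌊x + k * γ⌋ = ⌊y + k * γ⌋ :=
    (Finset.sum_eq_sum_iff_of_le hle).1 hF
  apply List.map_congr_left
  intro k hk
  have hkm : k < m := List.mem_range.mp hk
  have h₁ : ⌊x + k * γ⌋ = ⌊y + k * γ⌋ := heq k (Finset.mem_range.mpr (by omega))
  have h₂ : ⌊x + (k+1 : ℕ) * γ⌋ = ⌊y + (k+1 : ℕ) * γ⌋ := heq (k+1) (Finset.mem_range.mpr (by omega))
  have hx2 : x + ((k+1 : ℕ) : ℝ) * γ = (x + k * γ) + γ := by push_cast; ring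
  have hy2 : y + ((k+1 : ℕ) : ℝ) * γ = (y + k * γ) + γ := by push_cast; ring
  rw [hx2, hy2, floor_step _ _ h0 h1, floor_step _ _ h0 h1] at h₂
  split_ifs at h₂ ⊢ with hc1 hc2 <;> simp_all <;> omega

/-- Complexity bound for Sturmian words: at most `m+1` factors of length `m`. -/
lemma sturmian_complexity (γ ρ : ℝ) (h0 : 0 < γ) (h1 : γ < 1) (m : ℕ) :
    {w : List Bool | ∃ i, w = fac (sturmian γ ρ) i m}.Finite ∧
    {w : List Bool | ∃ i, w = fac (sturmian γ ρ) i m}.ncard ≤ m + 1 := by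
  set S' : Set (List Bool) := {w | ∃ x ∈ Set.Ico (0:ℝ) 1, w = W γ x m} with hS'
  have hsub : {w : List Bool | ∃ i, w = fac (sturmian γ ρ) i m} ⊆ S' := by
    rintro w ⟨i, rfl⟩
    exact ⟨Int.fract (ρ + i * γ), ⟨Int.fract_nonneg _, Int.fract_lt_one _⟩,
      by rw [fac_sturmian, W_fract]⟩
  set L : ℤ := ∑ k ∈ Finset.range (m+1), ⌊(k : ℝ) * γ⌋ with hL
  have hmaps : ∀ w ∈ S', F m w ∈ Set.Icc L (L + m) := by
    rintro w ⟨x, hx, rfl⟩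
    rw [F_W _ _ h0 h1 _ hx]
    constructor
    · apply Finset.sum_le_sum
      intro k _
      exact Int.floor_le_floor (by linarith [hx.1])
    · rw [Finset.sum_range_succ' (fun k => ⌊x + (k:ℝ) * γ⌋) m,
        hL, Finset.sum_range_succ' (fun k => ⌊(k:ℝ) * γ⌋) m]
      have h00 : ⌊x + ((0:ℕ):ℝ) * γ⌋ = ⌊((0:ℕ):ℝ) * γ⌋ := by
        simp [Int.floor_eq_zero_iff.2 hx]
      have hterm : ∀ k ∈ Finset.range m, ⌊x + ((k+1:ℕ):ℝ) * γ⌋ ≤ ⌊((k+1:ℕ):ℝ) * γ⌋ + 1 := by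
        intro k _
        have : x + ((k+1:ℕ):ℝ) * γ < ((k+1:ℕ):ℝ) * γ + 1 := by linarith [hx.2]
        calc ⌊x + ((k+1:ℕ):ℝ) * γ⌋ ≤ ⌊((k+1:ℕ):ℝ) * γ + 1⌋ := Int.floor_le_floor this.le
        _ = ⌊((k+1:ℕ):ℝ) * γ⌋ + 1 := by
            rw [show ((1:ℝ)) = ((1:ℤ):ℝ) by norm_num, Int.floor_add_intCast]
      calc ∑ k ∈ Finset.range m, ⌊x + ((k+1:ℕ):ℝ) * γ⌋ + ⌊x + ((0:ℕ):ℝ) * γ⌋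
          ≤ ∑ k ∈ Finset.range m, (⌊((k+1:ℕ):ℝ) * γ⌋ + 1) + ⌊((0:ℕ):ℝ) * γ⌋ := by
            rw [h00]; exact add_le_add (Finset.sum_le_sum hterm) le_rfl
        _ = (∑ k ∈ Finset.range m, ⌊((k+1:ℕ):ℝ) * γ⌋ + ⌊((0:ℕ):ℝ) * γ⌋) + m := by
            rw [Finset.sum_add_distrib, Finset.sum_const, Finset.card_range]; simp
  have hinj : Set.InjOn (F m) S' := by
    rintro w₁ ⟨x, hx, rfl⟩ w₂ ⟨y, hy, rfl⟩ hF
    rcases le_total x y with h | h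
    · exact W_eq_of_F_eq γ h0 h1 m hx hy h hF
    · exact (W_eq_of_F_eq γ h0 h1 m hy hx h hF.symm).symm
  have hIcc : (Set.Icc L (L + m)).Finite := Set.finite_Icc _ _
  have hfin' : S'.Finite :=
    Set.Finite.of_finite_image (hIcc.subset (Set.image_subset_iff.2 hmaps)) hinj
  refine ⟨hfin'.subset hsub, ?_⟩
  calc {w : List Bool | ∃ i, w = fac (sturmian γ ρ) i m}.ncard
      ≤ S'.ncard := Set.ncard_le_ncard hsub hfin'
    _ ≤ (Set.Icc L (L + m)).ncard := Set.ncard_le_ncard_of_injOn (F m) hmaps hinj hIcc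
    _ = m + 1 := by
        rw [← Finset.coe_Icc, Set.ncard_coe_finset, Int.card_Icc]
        omega

/-! ### Counting letters and the colouring -/

lemma countB_succ (u : ℕ → Bool) (k : ℕ) :
    countB u (k+1) = countB u k + (if u k then 1 else 0) := by
  simp only [countB, Finset.range_add_one, Finset.filter_insert]
  split_ifs with h
  · rw [Finset.card_insert_of_notMem (by simp)]
  · rfl

lemma count_fac_succ (u : ℕ → Bool) (i j : ℕ) :
    (fac u i (j+1)).count true = (fac u i j).count true + (if u (i+j) then 1 else 0) := by
  rw [fac_succ, List.count_append]
  cases h : u (i+j) <;> simp [h]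

lemma countB_add (u : ℕ → Bool) (i j : ℕ) :
    countB u (i + j) = countB u i + (fac u i j).count true := by
  induction j with
  | zero => simp [fac]
  | succ k ih => rw [← add_assoc, countB_succ, ih, count_fac_succ]; ring

lemma count_take_lt (w : List Bool) (j : ℕ) (hj : j < w.length)
    (h : w.getD j false = true) : (w.take j).count true < w.count true := by
  have hsplit : w = w.take (j+1) ++ w.drop (j+1) := (List.take_append_drop _ _).symm
  have hTake : w.take (j+1) = w.take j ++ [w[j]] := by
    rw [List.take_succ]
    simp [List.getElem?_eq_getElem hj]
  have hgj : w[j] = true := by rwa [List.getD_eq_getElem _ _ hj] at h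
  calc (w.take j).count true < (w.take j).count true + 1 := Nat.lt_succ_self _
    _ = (w.take (j+1)).count true := by rw [hTake, List.count_append, hgj]; simp
    _ ≤ (w.take (j+1)).count true + (w.drop (j+1)).count true := Nat.le_add_right _ _
    _ = w.count true := by conv_rhs => rw [hsplit, List.count_append]

/-- Reconstruction of a coloured factor from the boolean factor and the b-factor. -/
def G {A : Type*} (n : ℕ) (w : List Bool) (l : List A) (c : A) : List A :=
  (List.range n).map (fun j : ℕ =>
    if w.getD j false then l.getD ((w.take j).count true) c else c)

lemma fac_colour_eq {A : Type*} (u : ℕ → Bool) (b : ℕ → A) (c : A) (i n : ℕ) :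
    fac (colour u (fun _ => c) b) i n
      = G n (fac u i n) (fac b (countB u i) ((fac u i n).count true)) c := by
  apply List.map_congr_left
  intro j hj
  have hjn : j < n := List.mem_range.mp hj
  have h1 : (fac u i n).getD j false = u (i + j) := fac_getD u i n j hjn false
  rw [colour, h1]
  cases h : u (i+j) with
  | false => simp [h]
  | true =>
    simp only [h, if_true]
    have htake : (fac u i n).take j = fac u i j := fac_take u i n j hjn.le
    have hc : ((fac u i n).take j).count true < (fac u i n).count true := by
      apply count_take_lt _ _ (by rw [fac_length]; exact hjn)
      rw [h1, h]
    rw [fac_getD b _ _ _ hc c, htake, ← countB_add]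

theorem stmt_5 (α ρ₁ γ ρ₂ : ℝ) (hα : α ∈ Set.Ioo (0:ℝ) 1) (hirrα : Irrational α)
    (hγ : γ ∈ Set.Ioo (0:ℝ) 1) (hirrγ : Irrational γ)
    (hρ₁ : ρ₁ ∈ Set.Ico (0:ℝ) 1) (hρ₂ : ρ₂ ∈ Set.Ico (0:ℝ) 1)
    (n : ℕ) (hn : 1 ≤ n) :
    ({w : List ℕ | ∃ i, w = fac (colour (sturmian α ρ₁) (fun _ => 1) (sturmian23 γ ρ₂)) i n}.ncard : ℤ) ≤
      ({w : List Bool | (∃ i, w = fac (sturmian α ρ₁) i n) ∧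
          (w.count true : ℤ) = ⌈(n : ℝ) * α⌉}.ncard : ℤ) + (n + 1) * ⌈(n : ℝ) * α⌉ := by
  obtain ⟨hα0, hα1⟩ := hα
  obtain ⟨hγ0, hγ1⟩ := hγ
  set u := sturmian α ρ₁ with hu
  set b := sturmian23 γ ρ₂ with hb
  set Q : ℤ := ⌈(n:ℝ) * α⌉ with hQ
  -- the ceiling is the floor plus one
  have hirr : Irrational ((n:ℝ) * α) := hirrα.natCast_mul (by omega)
  have hQfloor : Q = ⌊(n:ℝ) * α⌋ + 1 := by
    have h1 : Q ≤ ⌊(n:ℝ) * α⌋ + 1 := Int.ceil_le_floor_add_one _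
    have h2 : ⌊(n:ℝ) * α⌋ < Q := by
      have hlt : (⌊(n:ℝ) * α⌋ : ℝ) < (n:ℝ) * α :=
        lt_of_le_of_ne (Int.floor_le _) (fun h => hirr.ne_int _ h.symm)
      exact_mod_cast hlt.trans_le (Int.le_ceil _)
    omega
  have hQ0 : 0 ≤ Q := Int.ceil_nonneg (by positivity)
  -- count of `true` in any factor of `u` of length `n` is `Q-1` or `Q`
  have hcount : ∀ i : ℕ, ⌊(n:ℝ) * α⌋ ≤ ((fac u i n).count true : ℤ) ∧
      ((fac u i n).count true : ℤ) ≤ Q := by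
    intro i
    rw [hu, fac_sturmian, W_fract, W_count _ _ hα0 hα1]
    set x := Int.fract (ρ₁ + i * α) with hxdef
    have hx0 : 0 ≤ x := Int.fract_nonneg _
    have hx1 : x < 1 := Int.fract_lt_one _
    have hfl : ⌊x⌋ = 0 := Int.floor_eq_zero_iff.2 ⟨hx0, hx1⟩
    rw [hfl]
    constructor
    · have := Int.floor_le_floor (a := (n:ℝ) * α) (b := x + n * α) (by linarith)
      omega
    · have h1 : ⌊x + (n:ℝ) * α⌋ ≤ ⌊(n:ℝ) * α + 1⌋ := Int.floor_le_floor (by linarith)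
      rw [show ((1:ℝ)) = ((1:ℤ):ℝ) by norm_num, Int.floor_add_intCast] at h1
      omega
  -- the factors of u of length n
  have hU := sturmian_complexity α ρ₁ hα0 hα1 n
  rw [← hu] at hU
  set UF : Finset (List Bool) := hU.1.toFinset with hUF
  have hUFcard : UF.card ≤ n + 1 := by
    rw [hUF, ← Set.ncard_eq_toFinset_card _ hU.1]
    exact hU.2
  -- the factors of b of each length
  have hBall : ∀ m : ℕ, {l : List ℕ | ∃ i, l = fac b i m}.Finite ∧
      {l : List ℕ | ∃ i, l = fac b i m}.ncard ≤ m + 1 := by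
    intro m
    have hmap : ∀ i, fac b i m
        = (fac (sturmian γ ρ₂) i m).map (fun t : Bool => if t then 3 else 2) := by
      intro i
      rw [fac_map]
      apply List.map_congr_left
      intro k _
      show b (i + k) = if (sturmian γ ρ₂ (i + k)) = true then 3 else 2
      rw [hb]
      by_cases h : 1 - γ ≤ Int.fract (ρ₂ + (↑(i+k) : ℝ) * γ) <;>
        simp [sturmian, sturmian23, h]
    have himg : {l : List ℕ | ∃ i, l = fac b i m}
        = (List.map (fun t : Bool => if t then 3 else 2)) ''
          {w : List Bool | ∃ i, w = fac (sturmian γ ρ₂) i m} := by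
      ext l
      constructor
      · rintro ⟨i, rfl⟩
        exact ⟨fac (sturmian γ ρ₂) i m, ⟨i, rfl⟩, (hmap i).symm⟩
      · rintro ⟨w, ⟨i, rfl⟩, rfl⟩
        exact ⟨i, (hmap i).symm⟩
    have hC := sturmian_complexity γ ρ₂ hγ0 hγ1 m
    rw [himg]
    exact ⟨hC.1.image _, le_trans (Set.ncard_image_le hC.1) hC.2⟩
  have hBfin : ∀ m : ℕ, {l : List ℕ | ∃ i, l = fac b i m}.Finite := fun m => (hBall m).1
  set Bf : ℕ → Finset (List ℕ) := fun m => (hBfin m).toFinset with hBf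
  -- the target finset of pairs
  set TF : Finset (List Bool × List ℕ) :=
    UF.biUnion (fun w => ({w} : Finset (List Bool)) ×ˢ Bf (w.count true)) with hTF
  -- the coloured factors are images of pairs in TF
  have hVsub : {w : List ℕ | ∃ i, w = fac (colour u (fun _ => 1) b) i n}
      ⊆ (fun p : List Bool × List ℕ => G n p.1 p.2 1) '' ↑TF := by
    rintro w ⟨i, rfl⟩
    refine ⟨(fac u i n, fac b (countB u i) ((fac u i n).count true)), ?_, ?_⟩
    · rw [Finset.mem_coe, hTF, Finset.mem_biUnion]
      exact ⟨fac u i n, (Set.Finite.mem_toFinset _).2 ⟨i, rfl⟩,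
        Finset.mem_product.2 ⟨Finset.mem_singleton_self _,
          (Set.Finite.mem_toFinset _).2 ⟨countB u i, rfl⟩⟩⟩
    · exact (fac_colour_eq u b 1 i n).symm
  have hVcard : ({w : List ℕ | ∃ i, w = fac (colour u (fun _ => 1) b) i n}.ncard) ≤ TF.card := by
    calc {w : List ℕ | ∃ i, w = fac (colour u (fun _ => 1) b) i n}.ncard
        ≤ ((fun p : List Bool × List ℕ => G n p.1 p.2 1) '' ↑TF).ncard :=
          Set.ncard_le_ncard hVsub (TF.finite_toSet.image _)
      _ ≤ (↑TF : Set (List Bool × List ℕ)).ncard := Set.ncard_image_le TF.finite_toSet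
      _ = TF.card := Set.ncard_coe_finset _
  -- bound the cardinality of TF
  have hterm : ∀ w ∈ UF, ((Bf (w.count true)).card : ℤ)
      ≤ Q + (if (w.count true : ℤ) = Q then 1 else 0) := by
    intro w hw
    obtain ⟨i, rfl⟩ := (Set.Finite.mem_toFinset _).1 hw
    have hcard : ((Bf ((fac u i n).count true)).card : ℤ) ≤ ((fac u i n).count true : ℤ) + 1 := by
      have := (hBall ((fac u i n).count true)).2
      rw [Set.ncard_eq_toFinset_card _ (hBfin _)] at this
      exact_mod_cast this
    have hci := hcount i
    split_ifs with hQeq <;> omega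
  have hTFcard : (TF.card : ℤ) ≤ (UF.card : ℤ) * Q +
      ((UF.filter (fun w => (w.count true : ℤ) = Q)).card : ℤ) := by
    have h1 : TF.card ≤ ∑ w ∈ UF, (({w} : Finset (List Bool)) ×ˢ Bf (w.count true)).card :=
      Finset.card_biUnion_le
    have h2 : ∀ w, (({w} : Finset (List Bool)) ×ˢ Bf (w.count true)).card
        = (Bf (w.count true)).card := by
      intro w; rw [Finset.card_product, Finset.card_singleton, one_mul]
    calc (TF.card : ℤ) ≤ ∑ w ∈ UF, ((Bf (w.count true)).card : ℤ) := by
          rw [← Nat.cast_sum]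
          exact_mod_cast (by simpa only [h2] using h1 : TF.card ≤ ∑ w ∈ UF, (Bf (w.count true)).card)
      _ ≤ ∑ w ∈ UF, (Q + (if (w.count true : ℤ) = Q then 1 else 0)) := Finset.sum_le_sum hterm
      _ = (UF.card : ℤ) * Q + ((UF.filter (fun w => (w.count true : ℤ) = Q)).card : ℤ) := by
          rw [Finset.sum_add_distrib, Finset.sum_const, Finset.sum_boole, nsmul_eq_mul]
  -- identify the P-set
  have hPeq : {w : List Bool | (∃ i, w = fac u i n) ∧ (w.count true : ℤ) = Q}
      = ↑(UF.filter (fun w => (w.count true : ℤ) = Q)) := by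
    ext w
    simp only [Set.mem_setOf_eq, Finset.coe_filter, hUF, Set.Finite.mem_toFinset,
      Set.mem_setOf_eq]
  have hPcard : {w : List Bool | (∃ i, w = fac u i n) ∧ (w.count true : ℤ) = Q}.ncard
      = (UF.filter (fun w => (w.count true : ℤ) = Q)).card := by
    rw [hPeq, Set.ncard_coe_finset]
  -- final arithmetic
  have hmul : (UF.card : ℤ) * Q ≤ ((n : ℤ) + 1) * Q := by
    apply mul_le_mul_of_nonneg_right _ hQ0
    exact_mod_cast hUFcard
  rw [hPcard]
  have hV' : (({w : List ℕ | ∃ i, w = fac (colour u (fun _ => 1) b) i n}.ncard : ℤ)) ≤ (TF.card : ℤ) := by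
    exact_mod_cast hVcard
  push_cast
  linarith
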